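/- Let L/K be a finite separable totally ramified extension of local fields of degree n, let v: L* → ℤ/nℤ be the map x ↦ (v_L(x) mod n), and let d̄ = (−d_{L/K} − 1 mod nℤ). Let V be the kernel of the trace map Tr_{L/K}: L → K. Then {v(x) : x ∈ V, x ≠ 0} = (ℤ/nℤ) \ {d̄}; that is, exactly one residue class modulo n does not occur as the valuation of a non-zero trace-zero element of L. -/

import Mathlib

/-- A local field structure on a field `K`: a normalized (surjective) discrete
valuation `v : K* ↠ ℤ`, extended by a junk value at `0`, with respect to which
`K` is complete. -/
structure LocalFieldStruct (K : Type) [Field K] where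
  /-- the valuation; its value at `0` is irrelevant -/
  v : K → ℤ
  v_mul : ∀ x y : K, x ≠ 0 → y ≠ 0 → v (x * y) = v x + v y
  v_add : ∀ x y : K, x ≠ 0 → y ≠ 0 → x + y ≠ 0 → min (v x) (v y) ≤ v (x + y)
  v_surj : ∀ n : ℤ, ∃ x : K, x ≠ 0 ∧ v x = n
  complete : ∀ a : ℕ → K,
      (∀ N : ℤ, ∃ M : ℕ, ∀ m : ℕ, M ≤ m → ∀ n : ℕ, M ≤ n →
        a m = a n ∨ N ≤ v (a m - a n)) →
      ∃ x : K, ∀ N : ℤ, ∃ M : ℕ, ∀ n : ℕ, M ≤ n → a n = x ∨ N ≤ v (a n - x)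

namespace LocalFieldStruct

variable {K L : Type} [Field K] [Field L]

/-- `x` lies in the valuation ring `O_K`. -/
def Integral (w : LocalFieldStruct K) (x : K) : Prop :=
  x = 0 ∨ 0 ≤ w.v x

/-- The residue characteristic of `K` is the prime `p`, i.e. `p` maps to `0`
in the residue field of the valuation ring. -/
def ResidueCharP (w : LocalFieldStruct K) (p : ℕ) : Prop :=
  p.Prime ∧ ((p : K) = 0 ∨ 0 < w.v (p : K))

/-- `K` has mixed characteristic `(0, p)`: `K` has characteristic `0` and its
residue field has characteristic `p > 0`. -/
def MixedChar (w : LocalFieldStruct K) (p : ℕ) : Prop :=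
  CharZero K ∧ p.Prime ∧ 0 < w.v (p : K)

/-- `e` is the ramification index `e_{L/K}`: the valuation of `L` restricted to
`K` is `e` times the valuation of `K`. -/
def IsRamificationIndex (wK : LocalFieldStruct K) (wL : LocalFieldStruct L)
    [Algebra K L] (e : ℕ) : Prop :=
  0 < e ∧ ∀ x : K, x ≠ 0 → wL.v (algebraMap K L x) = (e : ℤ) * wK.v x

/-- `d` is the valuation `d_{L/K}` of the different of `L/K`, characterized by
`Tr_{L/K}(𝔭_L^i) ⊆ O_K ↔ i ≥ -d` for all `i : ℤ`. -/
def IsDifferentVal (wK : LocalFieldStruct K) (wL : LocalFieldStruct L)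
    [Algebra K L] (d : ℤ) : Prop :=
  ∀ i : ℤ,
    (∀ x : L, (x ≠ 0 → i ≤ wL.v x) → wK.Integral (Algebra.trace K L x)) ↔ -d ≤ i

end LocalFieldStruct

/-- `x` is a normal basis generator of `L` over `K`: the Galois conjugates of
`x` form a `K`-basis of `L`. -/
def IsNormalElement (K : Type) [Field K] {L : Type} [Field L] [Algebra K L]
    (x : L) : Prop :=
  LinearIndependent K (fun σ : L ≃ₐ[K] L => σ x) ∧
    Submodule.span K (Set.range fun σ : L ≃ₐ[K] L => σ x) = ⊤

/-- The valuation criterion `VC(L/K)`, for an extension with ramification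
index `e` and different of valuation `d`: every nonzero `x ∈ L` with
`v_L(x) ≡ -d-1 (mod e)` is a normal basis generator of `L` over `K`. -/
def VC (K : Type) [Field K] {L : Type} [Field L] [Algebra K L]
    (wL : LocalFieldStruct L) (e : ℕ) (d : ℤ) : Prop :=
  ∀ x : L, x ≠ 0 → Int.ModEq (e : ℤ) (wL.v x) (-d - 1) → IsNormalElement K x

open LocalFieldStruct

namespace LocalFieldStruct
variable {K : Type} [Field K] (w : LocalFieldStruct K)

lemma v_one' : w.v 1 = 0 := by
  have := w.v_mul 1 1 one_ne_zero one_ne_zero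
  simp at this; linarith

lemma v_neg' (x : K) (hx : x ≠ 0) : w.v (-x) = w.v x := by
  have h1 : w.v (-1 : K) = 0 := by
    have := w.v_mul (-1) (-1) (by norm_num) (by norm_num)
    simp [w.v_one'] at this; linarith
  have := w.v_mul (-1) x (by norm_num) hx
  simp only [neg_one_mul] at this
  omega

lemma v_inv' (x : K) (hx : x ≠ 0) : w.v x⁻¹ = - w.v x := by
  have := w.v_mul x x⁻¹ hx (inv_ne_zero hx)
  rw [mul_inv_cancel₀ hx, w.v_one'] at this
  omega

lemma v_add_lt' (x y : K) (hx : x ≠ 0) (hy : y ≠ 0) (h : w.v x < w.v y) :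
    x + y ≠ 0 ∧ w.v (x + y) = w.v x := by
  have hne : x + y ≠ 0 := by
    intro h0
    have hyx : y = -x := by linear_combination h0
    rw [hyx, w.v_neg' x hx] at h
    omega
  refine ⟨hne, ?_⟩
  have h1 := w.v_add x y hx hy hne
  have h2 := w.v_add (x + y) (-y) hne (neg_ne_zero.mpr hy) (by ring_nf; simpa using hx)
  rw [w.v_neg' y hy] at h2
  have h3 : x + y + -y = x := by ring
  rw [h3] at h2
  omega

lemma v_pow' (x : K) (hx : x ≠ 0) (k : ℕ) : w.v (x ^ k) = k * w.v x := by
  induction k with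
  | zero => simp [w.v_one']
  | succ k ih =>
    rw [pow_succ, w.v_mul _ _ (pow_ne_zero k hx) hx, ih]
    push_cast; ring

lemma v_sum' {ι : Type} (s : Finset ι) (x : ι → K)
    (hx : ∀ i ∈ s, x i ≠ 0)
    (hdist : ∀ i ∈ s, ∀ j ∈ s, i ≠ j → w.v (x i) ≠ w.v (x j))
    (hs : s.Nonempty) :
    ∃ i ∈ s, (∑ j ∈ s, x j) ≠ 0 ∧ w.v (∑ j ∈ s, x j) = w.v (x i) ∧
      ∀ j ∈ s, w.v (x i) ≤ w.v (x j) := by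
  induction s using Finset.cons_induction with
  | empty => exact absurd hs (by simp)
  | cons a t ha ih =>
    rw [Finset.sum_cons]
    rcases t.eq_empty_or_nonempty with rfl | htne
    · exact ⟨a, by simp, by simpa using hx a (by simp), by simp, by simp⟩
    · obtain ⟨i, hit, hsne, hsv, hmin⟩ := ih (fun j hj => hx j (Finset.mem_cons_of_mem hj))
        (fun j hj k hk hjk => hdist j (Finset.mem_cons_of_mem hj) k (Finset.mem_cons_of_mem hk) hjk) htne
      have hai : a ≠ i := fun h => ha (h ▸ hit)
      have hxa : x a ≠ 0 := hx a (Finset.mem_cons_self a t)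
      have hvne : w.v (x a) ≠ w.v (x i) :=
        hdist a (Finset.mem_cons_self a t) i (Finset.mem_cons_of_mem hit) hai
      rcases lt_or_gt_of_ne hvne with hlt | hgt
      · obtain ⟨hne, hv⟩ := w.v_add_lt' (x a) (∑ j ∈ t, x j) hxa hsne (by omega)
        refine ⟨a, Finset.mem_cons_self a t, hne, hv, ?_⟩
        intro j hj
        rcases Finset.mem_cons.mp hj with rfl | hj
        · exact le_refl _
        · exact le_trans (le_of_lt (by omega)) (hmin j hj)
      · obtain ⟨hne, hv⟩ := w.v_add_lt' (∑ j ∈ t, x j) (x a) hsne hxa (by omega)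
        rw [add_comm] at hne hv
        refine ⟨i, Finset.mem_cons_of_mem hit, hne, by omega, ?_⟩
        intro j hj
        rcases Finset.mem_cons.mp hj with rfl | hj
        · omega
        · exact hmin j hj

end LocalFieldStruct

open LocalFieldStruct


lemma int_mul_add_eq_zero {n a j : ℤ} (hn : 0 < n) (hj : 0 ≤ j) (hj2 : j < n)
    (h : n * a + j = 0) : j = 0 ∧ a = 0 := by
  rcases lt_trichotomy a 0 with h3 | h3 | h3
  · exfalso
    nlinarith [mul_le_mul_of_nonneg_left (show a ≤ -1 by omega) hn.le]
  · subst h3; constructor <;> omega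
  · exfalso
    nlinarith [mul_le_mul_of_nonneg_left (show 1 ≤ a by omega) hn.le]

lemma int_mul_add_inj {n a b j k : ℤ} (hn : 0 < n) (hj : 0 ≤ j) (hj2 : j < n)
    (hk : 0 ≤ k) (hk2 : k < n) (h : n * a + j = n * b + k) : j = k := by
  rcases lt_trichotomy (a - b) 0 with h3 | h3 | h3
  · exfalso
    nlinarith [mul_le_mul_of_nonneg_left (show a - b ≤ -1 by omega) hn.le]
  · have h4 : n * a = n * b := by rw [show a = b by omega]
    linarith
  · exfalso
    nlinarith [mul_le_mul_of_nonneg_left (show 1 ≤ a - b by omega) hn.le]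

section Main
variable {K L : Type} [Field K] [Field L] [Algebra K L] [FiniteDimensional K L]
variable (wK : LocalFieldStruct K) (wL : LocalFieldStruct L) (n : ℕ)

lemma algebraMap_ne_zero' {a : K} (ha : a ≠ 0) : algebraMap K L a ≠ 0 :=
  (map_ne_zero (algebraMap K L)).mpr ha

lemma v_smul' (htot : IsRamificationIndex wK wL n) (a : K) (ha : a ≠ 0)
    (x : L) (hx : x ≠ 0) : wL.v (a • x) = n * wK.v a + wL.v x := by
  rw [Algebra.smul_def, wL.v_mul _ _ (algebraMap_ne_zero' ha) hx, htot.2 a ha]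

/-- powers of a uniformizer are linearly independent -/
lemma pi_pow_li (hn : n = Module.finrank K L) (htot : IsRamificationIndex wK wL n)
    (π : L) (hπ0 : π ≠ 0) (hπ : wL.v π = 1) :
    LinearIndependent K (fun i : Fin n => π ^ (i : ℕ)) := by
  classical
  rw [linearIndependent_iff']
  intro s g hsum i his
  by_contra hgi
  set s' : Finset (Fin n) := s.filter (fun j => g j ≠ 0) with hs'
  have hsub : s' ⊆ s := Finset.filter_subset _ _
  have hsum' : ∑ j ∈ s', g j • π ^ (j : ℕ) = 0 := by
    rw [hs', ← hsum]
    refine Finset.sum_filter_of_ne ?_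
    intro j _ hj h0
    exact hj (by simp [h0])
  have hterm : ∀ j : Fin n, g j ≠ 0 → wL.v (g j • π ^ (j : ℕ)) = n * wK.v (g j) + j := by
    intro j hj
    rw [v_smul' wK wL n htot (g j) hj _ (pow_ne_zero _ hπ0), wL.v_pow' π hπ0, hπ]
    ring
  have hne : ∀ j ∈ s', g j • π ^ (j : ℕ) ≠ 0 := by
    intro j hj
    have : g j ≠ 0 := (Finset.mem_filter.mp hj).2
    exact smul_ne_zero this (pow_ne_zero _ hπ0)
  have hdist : ∀ j ∈ s', ∀ k ∈ s', j ≠ k →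
      wL.v (g j • π ^ (j : ℕ)) ≠ wL.v (g k • π ^ (k : ℕ)) := by
    intro j hj k hk hjk
    rw [hterm j (Finset.mem_filter.mp hj).2, hterm k (Finset.mem_filter.mp hk).2]
    intro h
    have hj' : (j : ℕ) < n := j.isLt
    have hk' : (k : ℕ) < n := k.isLt
    have hne' : (j : ℕ) ≠ (k : ℕ) := fun h' => hjk (Fin.ext h')
    exact hne' (by
      have := int_mul_add_inj (n := (n:ℤ)) (by exact_mod_cast htot.1)
        (Int.natCast_nonneg (j:ℕ)) (by exact_mod_cast hj') (Int.natCast_nonneg (k:ℕ))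
        (by exact_mod_cast hk') h
      exact_mod_cast this)
  have hs'ne : s'.Nonempty := ⟨i, Finset.mem_filter.mpr ⟨his, hgi⟩⟩
  obtain ⟨j, hjs, hne0, -, -⟩ := wL.v_sum' s' _ hne hdist hs'ne
  exact hne0 hsum'

/-- residue field lemma: any valuation-zero element is congruent to a constant mod 𝔭 -/
lemma residue_lemma (hn : n = Module.finrank K L) (htot : IsRamificationIndex wK wL n)
    (u : L) (hu0 : u ≠ 0) (hu : wL.v u = 0) :
    ∃ a : K, a ≠ 0 ∧ (u = algebraMap K L a ∨
      (u - algebraMap K L a ≠ 0 ∧ 1 ≤ wL.v (u - algebraMap K L a))) := by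
  classical
  obtain ⟨π, hπ0, hπ⟩ := wL.v_surj 1
  haveI : Nonempty (Fin n) := ⟨⟨0, htot.1⟩⟩
  set b : Module.Basis (Fin n) K L :=
    basisOfLinearIndependentOfCardEqFinrank (pi_pow_li wK wL n hn htot π hπ0 hπ)
      (by simp [hn]) with hb
  have hbe : ∀ i : Fin n, b i = π ^ (i : ℕ) := fun i => by
    rw [hb, coe_basisOfLinearIndependentOfCardEqFinrank]
  set g : Fin n → K := fun i => b.repr u i with hg
  have hrepr : u = ∑ i : Fin n, g i • π ^ (i : ℕ) := by
    conv_lhs => rw [← b.sum_repr u]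
    exact Finset.sum_congr rfl (fun i _ => by rw [hbe])
  set s : Finset (Fin n) := Finset.univ.filter (fun j => g j ≠ 0) with hs
  have hsum : u = ∑ i ∈ s, g i • π ^ (i : ℕ) := by
    rw [hrepr, hs]
    refine (Finset.sum_filter_of_ne ?_).symm
    intro j _ hj h0
    exact hj (by simp [h0])
  have hterm : ∀ j ∈ s, wL.v (g j • π ^ (j : ℕ)) = n * wK.v (g j) + j := by
    intro j hj
    rw [v_smul' wK wL n htot (g j) (Finset.mem_filter.mp hj).2 _ (pow_ne_zero _ hπ0),
      wL.v_pow' π hπ0, hπ]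
    ring
  have hne : ∀ j ∈ s, g j • π ^ (j : ℕ) ≠ 0 := fun j hj =>
    smul_ne_zero (Finset.mem_filter.mp hj).2 (pow_ne_zero _ hπ0)
  have hdist : ∀ j ∈ s, ∀ k ∈ s, j ≠ k →
      wL.v (g j • π ^ (j : ℕ)) ≠ wL.v (g k • π ^ (k : ℕ)) := by
    intro j hj k hk hjk
    rw [hterm j hj, hterm k hk]
    intro h
    have hj' : (j : ℕ) < n := j.isLt
    have hk' : (k : ℕ) < n := k.isLt
    have hne' : (j : ℕ) ≠ (k : ℕ) := fun h' => hjk (Fin.ext h')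
    exact hne' (by
      have := int_mul_add_inj (n := (n:ℤ)) (by exact_mod_cast htot.1)
        (Int.natCast_nonneg (j:ℕ)) (by exact_mod_cast hj') (Int.natCast_nonneg (k:ℕ))
        (by exact_mod_cast hk') h
      exact_mod_cast this)
  have hsne : s.Nonempty := by
    rcases Finset.eq_empty_or_nonempty s with h | h
    · exfalso; apply hu0; rw [hsum, h, Finset.sum_empty]
    · exact h
  obtain ⟨i₀, hi₀s, hsum_ne, hsumv, hmin⟩ := wL.v_sum' s _ hne hdist hsne
  rw [← hsum] at hsum_ne hsumv
  -- the minimal term has valuation 0, so i₀ = 0 and v_K (g i₀) = 0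
  have hv0 : n * wK.v (g i₀) + (i₀ : ℕ) = 0 := by
    rw [hterm i₀ hi₀s] at hsumv; omega
  have hi₀0 : (i₀ : ℕ) = 0 := by
    have h1 : (i₀ : ℕ) < n := i₀.isLt
    have := (int_mul_add_eq_zero (n := (n:ℤ)) (by exact_mod_cast htot.1)
      (Int.natCast_nonneg _) (by exact_mod_cast h1) hv0).1
    exact_mod_cast this
  set z : Fin n := ⟨0, htot.1⟩ with hz
  have hi₀z : i₀ = z := Fin.ext (by simp [hz, hi₀0])
  refine ⟨g i₀, (Finset.mem_filter.mp hi₀s).2, ?_⟩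
  have hga : algebraMap K L (g i₀) = g i₀ • π ^ ((i₀ : ℕ)) := by
    rw [hi₀0, pow_zero, Algebra.smul_def, mul_one]
  by_cases hs1 : s = {i₀}
  · left
    rw [hsum, hs1, Finset.sum_singleton, hga]
  · right
    have hdiff : u - algebraMap K L (g i₀) = ∑ j ∈ s.erase i₀, g j • π ^ (j : ℕ) := by
      rw [hsum, hga, ← Finset.add_sum_erase s _ hi₀s]
      ring
    have hene : (s.erase i₀).Nonempty := by
      rcases Finset.eq_empty_or_nonempty (s.erase i₀) with h | h
      · exfalso; apply hs1
        apply Finset.eq_singleton_iff_unique_mem.mpr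
        refine ⟨hi₀s, fun x hx => ?_⟩
        by_contra hxne
        exact absurd (Finset.mem_erase.mpr ⟨hxne, hx⟩) (by simp [h])
      · exact h
    obtain ⟨i₁, hi₁, hene0, henv, -⟩ := wL.v_sum' (s.erase i₀) _
      (fun j hj => hne j (Finset.mem_of_mem_erase hj))
      (fun j hj k hk hjk => hdist j (Finset.mem_of_mem_erase hj) k (Finset.mem_of_mem_erase hk) hjk)
      hene
    rw [← hdiff] at hene0 henv
    refine ⟨hene0, ?_⟩
    rw [henv, hterm i₁ (Finset.mem_of_mem_erase hi₁)]
    -- valuation of the i₁ term is ≥ 0 by minimality and ≠ 0 since i₁ ≠ 0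
    have hge : wL.v (g i₀ • π ^ ((i₀:ℕ))) ≤ wL.v (g i₁ • π ^ ((i₁:ℕ))) :=
      hmin i₁ (Finset.mem_of_mem_erase hi₁)
    rw [hterm i₀ hi₀s, hterm i₁ (Finset.mem_of_mem_erase hi₁)] at hge
    have hi₁ne : i₁ ≠ i₀ := (Finset.mem_erase.mp hi₁).1
    have hi₁n : (i₁ : ℕ) < n := i₁.isLt
    have hi₁0 : (i₁ : ℕ) ≠ 0 := by
      intro h0
      exact hi₁ne (Fin.ext (by simp [h0, hi₀0]))
    -- 0 ≤ n * vK(g i₁) + i₁ and it's ≢ 0 mod n unless... show ≥ 1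
    by_contra hlt
    push_neg at hlt
    have heq0 : (n:ℤ) * wK.v (g i₁) + ((i₁:ℕ):ℤ) = 0 := by omega
    have h2 := (int_mul_add_eq_zero (n := (n:ℤ)) (by exact_mod_cast htot.1)
      (Int.natCast_nonneg _) (by exact_mod_cast hi₁n) heq0).1
    exact hi₁0 (by exact_mod_cast h2)

end Main

section Main2
variable {K L : Type} [Field K] [Field L] [Algebra K L] [FiniteDimensional K L]
variable (wK : LocalFieldStruct K) (wL : LocalFieldStruct L) (n : ℕ)

lemma trace_val_lower (htot : IsRamificationIndex wK wL n) (d : ℤ)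
    (hd : IsDifferentVal wK wL d) (i s : ℤ) (hs : (n:ℤ) * s ≤ i + d)
    (x : L) (hx : x ≠ 0 → i ≤ wL.v x) :
    Algebra.trace K L x = 0 ∨ s ≤ wK.v (Algebra.trace K L x) := by
  obtain ⟨c, hc0, hcv⟩ := wK.v_surj (-s)
  have key := (hd (i - n * s)).mpr (by omega) (c • x) (by
    intro hcx
    have hx0 : x ≠ 0 := by
      intro h; exact hcx (by rw [h, smul_zero])
    rw [v_smul' wK wL n htot c hc0 x hx0, hcv]
    have h9 : (n:ℤ) * -s = -((n:ℤ)*s) := by ring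
    have := hx hx0
    linarith)
  rw [map_smul, smul_eq_mul] at key
  rcases key with h0 | hge
  · rcases mul_eq_zero.mp h0 with h | h
    · exact absurd h hc0
    · exact Or.inl h
  · by_cases htr : Algebra.trace K L x = 0
    · exact Or.inl htr
    · right
      rw [wK.v_mul c _ hc0 htr, hcv] at hge
      omega

lemma trace_val_sharp (htot : IsRamificationIndex wK wL n) (d : ℤ)
    (hd : IsDifferentVal wK wL d) (i s : ℤ) (hlt : i + d < (n:ℤ) * (s+1)) :
    ∃ z : L, z ≠ 0 ∧ i ≤ wL.v z ∧ Algebra.trace K L z ≠ 0 ∧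
      wK.v (Algebra.trace K L z) ≤ s := by
  have h3 : ¬ ∀ x : L, (x ≠ 0 → i - n*(s+1) ≤ wL.v x) →
      wK.Integral (Algebra.trace K L x) :=
    fun hall => by have := (hd _).mp hall; omega
  push_neg at h3
  obtain ⟨z₀, hz₀v, hz₀i⟩ := h3
  simp only [LocalFieldStruct.Integral, not_or, not_le] at hz₀i
  obtain ⟨htr0, htrv⟩ := hz₀i
  have hz₀ne : z₀ ≠ 0 := by
    intro h; exact htr0 (by rw [h, map_zero])
  obtain ⟨c, hc0, hcv⟩ := wK.v_surj (s+1)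
  refine ⟨c • z₀, smul_ne_zero hc0 hz₀ne, ?_, ?_, ?_⟩
  · rw [v_smul' wK wL n htot c hc0 z₀ hz₀ne, hcv]
    have := hz₀v hz₀ne
    omega
  · rw [map_smul, smul_eq_mul]
    exact mul_ne_zero hc0 htr0
  · rw [map_smul, smul_eq_mul, wK.v_mul c _ hc0 htr0, hcv]
    omega

end Main2

open LocalFieldStruct in
/-- Let `L/K` be a finite separable totally ramified extension of local fields
of degree `n`, and let `d̄ = (-d_{L/K} - 1 mod n)`.  Then the set of valuations
mod `n` of non-zero trace-zero elements of `L` is exactly `(ℤ/nℤ) \ {d̄}`. -/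
theorem statement5 {K L : Type} [Field K] [Field L] [Algebra K L]
    [FiniteDimensional K L] [Algebra.IsSeparable K L]
    (wK : LocalFieldStruct K) (wL : LocalFieldStruct L)
    (n : ℕ) (hn : n = Module.finrank K L)
    (htot : IsRamificationIndex wK wL n)
    (d : ℤ) (hd : IsDifferentVal wK wL d) :
    {a : ZMod n | ∃ x : L, Algebra.trace K L x = 0 ∧ x ≠ 0 ∧
        ((wL.v x : ℤ) : ZMod n) = a} =
      {((-d - 1 : ℤ) : ZMod n)}ᶜ := by

  classical
  have hnpos : 0 < n := htot.1
  haveI : NeZero n := ⟨by omega⟩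
  ext a
  simp only [Set.mem_setOf_eq, Set.mem_compl_iff, Set.mem_singleton_iff]
  constructor
  · rintro ⟨x, htr, hx0, hvx⟩ heq
    rw [← hvx] at heq
    have hmod : (wL.v x) ≡ (-d-1) [ZMOD (n:ℕ)] :=
      (ZMod.intCast_eq_intCast_iff _ _ _).mp heq
    obtain ⟨k, hk⟩ := Int.ModEq.dvd hmod.symm
    obtain ⟨c, hc0, hcv⟩ := wK.v_surj (-k)
    set x' := c • x with hx'
    have hx'0 : x' ≠ 0 := smul_ne_zero hc0 hx0
    have hx'v : wL.v x' = -d-1 := by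
      rw [hx', v_smul' wK wL n htot c hc0 x hx0, hcv]
      have h9 : (n:ℤ) * -k = -((n:ℤ)*k) := by ring
      linarith
    have hx'tr : Algebra.trace K L x' = 0 := by
      rw [hx', map_smul, smul_eq_mul, htr, mul_zero]
    have hall : ∀ z : L, (z ≠ 0 → (-d-1 : ℤ) ≤ wL.v z) →
        wK.Integral (Algebra.trace K L z) := by
      intro z hz
      by_cases hz0 : z = 0
      · left; rw [hz0, map_zero]
      rcases le_or_gt (-d) (wL.v z) with hge | hlt
      · exact (hd (-d)).mpr le_rfl z (fun _ => hge)
      have hzv : wL.v z = -d-1 := by have := hz hz0; omega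
      set u := z * x'⁻¹ with hu
      have hu0 : u ≠ 0 := mul_ne_zero hz0 (inv_ne_zero hx'0)
      have huv : wL.v u = 0 := by
        rw [hu, wL.v_mul _ _ hz0 (inv_ne_zero hx'0), wL.v_inv' _ hx'0, hzv, hx'v]
        ring
      obtain ⟨b, hb0, hcase⟩ := residue_lemma wK wL n hn htot u hu0 huv
      have hzu : z = u * x' := by rw [hu]; field_simp
      rcases hcase with hbu | ⟨hw0, hwv⟩
      · have hzb : z = b • x' := by rw [hzu, hbu, Algebra.smul_def]
        left; rw [hzb, map_smul, hx'tr, smul_zero]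
      · have hzsplit : z = b • x' + (u - algebraMap K L b) * x' := by
          rw [Algebra.smul_def, hzu]; ring
        have htrz : Algebra.trace K L z =
            Algebra.trace K L ((u - algebraMap K L b) * x') := by
          rw [hzsplit, map_add, map_smul, hx'tr, smul_zero, zero_add]
        rw [htrz]
        apply (hd (-d)).mpr le_rfl
        intro _
        rw [wL.v_mul _ _ hw0 hx'0, hx'v]
        omega
    have := (hd (-d-1)).mp hall
    omega
  · intro ha
    set m : ℤ := (a.val : ℤ) with hm
    have hma : ((m : ℤ) : ZMod n) = a := by
      rw [hm]; push_cast; simp [ZMod.natCast_val, ZMod.cast_id]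
    have hndvd : ¬ ((n:ℤ) ∣ (m + d + 1)) := by
      intro hdvd
      apply ha
      obtain ⟨c, hc⟩ := hdvd
      have h5 : m ≡ -d - 1 [ZMOD (n:ℕ)] := by
        apply Int.modEq_iff_dvd.mpr
        exact ⟨-c, by rw [mul_neg, ← hc]; ring⟩
      rw [← hma]
      exact (ZMod.intCast_eq_intCast_iff _ _ _).mpr h5
    obtain ⟨s, hs1, hs2⟩ : ∃ s : ℤ, (n:ℤ) * s ≤ m + d ∧ m + d < (n:ℤ) * (s+1) := by
      refine ⟨(m+d)/(n:ℤ), ?_, ?_⟩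
      · have h1 := Int.mul_ediv_add_emod (m+d) (n:ℤ)
        have h2 := Int.emod_nonneg (m+d) (by positivity : (n:ℤ) ≠ 0)
        linarith
      · have h1 := Int.mul_ediv_add_emod (m+d) (n:ℤ)
        have h3 := Int.emod_lt_of_pos (m+d) (by exact_mod_cast hnpos : (0:ℤ) < n)
        nlinarith
    have hs2' : m + 1 + d < (n:ℤ) * (s+1) := by
      rcases eq_or_lt_of_le (by linarith : m + d + 1 ≤ (n:ℤ)*(s+1)) with heq | hlt
      · exact absurd ⟨s+1, heq⟩ hndvd
      · linarith
    obtain ⟨x₀, hx₀0, hx₀v⟩ := wL.v_surj m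
    by_cases htr0 : Algebra.trace K L x₀ = 0
    · exact ⟨x₀, htr0, hx₀0, by rw [hx₀v, hma]⟩
    · have hlow := trace_val_lower wK wL n htot d hd m s hs1 x₀ (fun _ => hx₀v.ge)
      have hlow' : s ≤ wK.v (Algebra.trace K L x₀) := hlow.resolve_left htr0
      obtain ⟨z, hz0, hzv, hztr, hztrv⟩ :=
        trace_val_sharp wK wL n htot d hd (m+1) s hs2'
      set u := Algebra.trace K L x₀ * (Algebra.trace K L z)⁻¹ with hu
      have hu0 : u ≠ 0 := mul_ne_zero htr0 (inv_ne_zero hztr)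
      have huv : 0 ≤ wK.v u := by
        rw [hu, wK.v_mul _ _ htr0 (inv_ne_zero hztr), wK.v_inv' _ hztr]
        omega
      set y := u • z with hy
      have hy0 : y ≠ 0 := smul_ne_zero hu0 hz0
      have hyv : m + 1 ≤ wL.v y := by
        rw [hy, v_smul' wK wL n htot u hu0 z hz0]
        have hnn : (0:ℤ) ≤ (n:ℤ) * wK.v u := mul_nonneg (by positivity) huv
        omega
      have hytr : Algebra.trace K L y = Algebra.trace K L x₀ := by
        rw [hy, map_smul, smul_eq_mul, hu]
        field_simp
      have hlt2 : wL.v x₀ < wL.v (-y) := by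
        rw [wL.v_neg' y hy0, hx₀v]; omega
      obtain ⟨hne, hv⟩ := wL.v_add_lt' x₀ (-y) hx₀0 (neg_ne_zero.mpr hy0) hlt2
      rw [← sub_eq_add_neg] at hne hv
      refine ⟨x₀ - y, ?_, hne, ?_⟩
      · rw [map_sub, hytr, sub_self]
      · rw [hv, hx₀v, hma]
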